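/- Every preference profile (finite family of strict total orders) over a set A of m alternatives is (m−1)-Euclidean: there exists an embedding x of voters and alternatives into ℝ^(m−1) such that for every voter v and alternatives a, b, if v strictly prefers a to b then ‖x(v) − x(a)‖ < ‖x(v) − x(b)‖. In fact one may place the alternatives at the standard simplex vertices e_1, …, e_{m−1}, 0 and each voter at a suitable convex combination. -/

import Mathlib

private lemma sum_ind {n : ℕ} (k : ℕ) (c : Fin n → ℝ) :
    (∑ i : Fin n, if (i : ℕ) = k then c i else 0)
      = if h : k < n then c ⟨k, h⟩ else 0 := by
  split_ifs with h
  · rw [Fintype.sum_eq_single (⟨k, h⟩ : Fin n)]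
    · simp
    · intro i hi
      rw [if_neg]
      exact fun hik => hi (Fin.ext hik)
  · apply Finset.sum_eq_zero
    intro i _
    rw [if_neg]
    have := i.isLt
    omega


/-- Every profile of strict total orders over m alternatives is
(m−1)-Euclidean. -/
theorem stmt_5 (m : ℕ) (hm : 1 ≤ m) (Voter A : Type) [Fintype Voter] [Fintype A]
    (hA : Fintype.card A = m)
    (pref : Voter → A → A → Prop) (hpref : ∀ v, IsStrictTotalOrder A (pref v)) :
    ∃ x : Voter ⊕ A → EuclideanSpace ℝ (Fin (m - 1)),
      ∀ v a b, pref v a b →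
        ‖x (Sum.inl v) - x (Sum.inr a)‖ < ‖x (Sum.inl v) - x (Sum.inr b)‖ := by
  classical
  set n := m - 1 with hn
  have hmn : m = n + 1 := by omega
  obtain ⟨e⟩ : Nonempty (A ≃ Fin m) := ⟨Fintype.equivFinOfCardEq hA⟩
  -- rank of an alternative for a voter: number of strictly preferred alternatives
  set rank : Voter → A → ℕ := fun v a => (Finset.univ.filter (fun c => pref v c a)).card
    with hrank
  have rank_lt : ∀ v a b, pref v a b → rank v a < rank v b := by
    intro v a b h
    haveI := hpref v
    apply Finset.card_lt_card
    constructor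
    · intro c hc
      simp only [Finset.mem_filter, Finset.mem_univ, true_and] at *
      exact trans_of (pref v) hc h
    · intro hsub
      have hb : a ∈ Finset.univ.filter (fun c => pref v c b) := by simp [h]
      have := hsub hb
      simp only [Finset.mem_filter, Finset.mem_univ, true_and] at this
      exact irrefl_of (pref v) a this
  set a0 : A := e.symm ⟨n, by omega⟩ with ha0
  set P : A → Fin n → ℝ := fun a i => if (i : ℕ) = (e a : ℕ) then 1 else 0 with hP
  set X : Voter → Fin n → ℝ := fun v i =>
    1/2 + (rank v a0 : ℝ) - (rank v (e.symm ⟨(i:ℕ), by omega⟩) : ℝ) with hX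
  have hXe : ∀ v (a : A) (h : (e a : ℕ) < n),
      X v ⟨(e a : ℕ), h⟩ = 1/2 + (rank v a0 : ℝ) - (rank v a : ℝ) := by
    intro v a h
    have key : ∀ (hh : ((⟨(e a : ℕ), h⟩ : Fin n) : ℕ) < m),
        e.symm (⟨((⟨(e a : ℕ), h⟩ : Fin n) : ℕ), hh⟩ : Fin m) = a := by
      intro hh
      rw [show (⟨((⟨(e a : ℕ), h⟩ : Fin n) : ℕ), hh⟩ : Fin m) = e a from Fin.ext rfl]
      exact e.symm_apply_apply a
    simp only [hX]
    rw [key]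
  have ha0' : ∀ a : A, ¬ ((e a : ℕ) < n) → a = a0 := by
    intro a h
    have h2 := (e a).isLt
    have : (e a : ℕ) = n := by omega
    rw [ha0]
    rw [show (⟨n, by omega⟩ : Fin m) = e a from Fin.ext this.symm]
    exact (e.symm_apply_apply a).symm
  have expand : ∀ v a, (∑ i, (X v i - P a i)^2)
      = (∑ i, (X v i)^2) - 2 * (if h : (e a : ℕ) < n then X v ⟨(e a : ℕ), h⟩ else 0)
        + (if (e a : ℕ) < n then 1 else 0) := by
    intro v a
    have h1 : ∀ i : Fin n, (X v i - P a i)^2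
        = ((X v i)^2 - 2*(if (i:ℕ) = (e a : ℕ) then X v i else 0))
          + (if (i:ℕ) = (e a : ℕ) then 1 else 0) := by
      intro i
      simp only [hP]
      split_ifs with h <;> ring
    rw [Finset.sum_congr rfl (fun i _ => h1 i), Finset.sum_add_distrib,
      Finset.sum_sub_distrib, ← Finset.mul_sum, sum_ind, sum_ind]
    congr 1
  refine ⟨fun s => WithLp.toLp 2 (Sum.elim X P s), ?_⟩
  intro v a b hab
  haveI := hpref v
  have hr := rank_lt v a b hab
  have key : (∑ i, (X v i - P a i)^2) < (∑ i, (X v i - P b i)^2) := by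
    rw [expand, expand]
    by_cases ha : (e a : ℕ) < n <;> by_cases hb : (e b : ℕ) < n
    · rw [dif_pos ha, dif_pos hb, if_pos ha, if_pos hb, hXe v a ha, hXe v b hb]
      have : (rank v a : ℝ) < (rank v b : ℝ) := by exact_mod_cast hr
      nlinarith
    · rw [dif_pos ha, dif_neg hb, if_pos ha, if_neg hb, hXe v a ha]
      have hb0 : b = a0 := ha0' b hb
      have : (rank v a : ℝ) < (rank v a0 : ℝ) := by
        rw [← hb0]; exact_mod_cast hr
      nlinarith
    · rw [dif_neg ha, dif_pos hb, if_neg ha, if_pos hb, hXe v b hb]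
      have ha0'' : a = a0 := ha0' a ha
      have : (rank v a0 : ℝ) < (rank v b : ℝ) := by
        rw [← ha0'']; exact_mod_cast hr
      nlinarith
    · rw [ha0' a ha, ha0' b hb] at hab
      exact absurd hab (irrefl_of (pref v) a0)
  have norm_eq : ∀ (y z : EuclideanSpace ℝ (Fin n)),
      ‖y - z‖ = Real.sqrt (∑ i, (y i - z i)^2) := by
    intro y z
    rw [EuclideanSpace.norm_eq]
    congr 1
    apply Finset.sum_congr rfl
    intro i _
    rw [show (y - z) i = y i - z i from rfl, Real.norm_eq_abs, sq_abs]
  rw [norm_eq, norm_eq]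
  simp only [Sum.elim_inl, Sum.elim_inr]
  apply Real.sqrt_lt_sqrt
  · positivity
  · exact key
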